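/- Let s₁, s₂ ∈ ℝ with -1 ≤ s₁ - s₂ ≤ 1 and k ≠ 0 an integer, ξ ∈ ℝ, t ∈ ℝ. Then (k² + ξ²)^{(s₁+1)/2} / ((ξ - tk)² + k²) ≤ C ⟨t⟩^{1 + s₁ - s₂} (k² + ξ²)^{s₂/2} for an absolute constant C (independent of k, ξ, t, s₁, s₂ in the admissible range). -/

import Mathlib

/-- For `-1 ≤ s₁ - s₂ ≤ 1`, `k ≠ 0`: the symbol estimate
`(k² + ξ²)^{(s₁+1)/2} / ((ξ - tk)² + k²) ≤ C ⟨t⟩^{1 + s₁ - s₂} (k² + ξ²)^{s₂/2}`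
with an absolute constant `C`. -/
theorem symbol_interpolation_bound :
    ∃ C : ℝ, 0 < C ∧ ∀ (s₁ s₂ t : ℝ) (k : ℤ) (ξ : ℝ), k ≠ 0 →
      -1 ≤ s₁ - s₂ → s₁ - s₂ ≤ 1 →
      ((k:ℝ)^2 + ξ^2) ^ ((s₁ + 1)/2) / ((ξ - t*k)^2 + (k:ℝ)^2) ≤
        C * (Real.sqrt (1 + t^2)) ^ (1 + s₁ - s₂) * ((k:ℝ)^2 + ξ^2) ^ (s₂/2) := by
  refine ⟨2, by norm_num, ?_⟩
  intro s₁ s₂ t k ξ hk h1 h2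
  set θ : ℝ := 1 + s₁ - s₂ with hθ
  have hθ0 : 0 ≤ θ := by simp only [hθ]; linarith
  have hθ2 : θ ≤ 2 := by simp only [hθ]; linarith
  have hk2 : (1:ℝ) ≤ (k:ℝ)^2 := by
    have h : (1:ℤ) ≤ k^2 := by rcases lt_or_gt_of_ne hk with h | h <;> nlinarith
    exact_mod_cast h
  set A : ℝ := (k:ℝ)^2 + ξ^2 with hA
  set B : ℝ := (ξ - t*k)^2 + (k:ℝ)^2 with hB
  have hApos : 0 < A := by positivity
  have hB1 : (1:ℝ) ≤ B := by nlinarith [sq_nonneg (ξ - t*k)]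
  have hBpos : 0 < B := lt_of_lt_of_le one_pos hB1
  set τ : ℝ := Real.sqrt (1 + t^2) with hτ
  have hτ0 : 0 ≤ τ := Real.sqrt_nonneg _
  have hτsq : τ^2 = 1 + t^2 := Real.sq_sqrt (by positivity)
  have hτ1 : (1:ℝ) ≤ τ := by nlinarith [sq_nonneg t]
  -- key: A ≤ 2 * τ^2 * B
  have hkey : A ≤ 2 * τ^2 * B := by
    rw [hτsq, hA, hB]
    nlinarith [sq_nonneg (ξ - 2*t*(k:ℝ)), sq_nonneg (t*(ξ - t*(k:ℝ))), sq_nonneg ((k:ℝ)*t)]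
  -- A^{θ/2} ≤ 2 * τ^θ * B
  have hstep : A ^ (θ/2) ≤ 2 * τ ^ θ * B := by
    calc A ^ (θ/2) ≤ (2 * τ^2 * B) ^ (θ/2) :=
          Real.rpow_le_rpow (le_of_lt hApos) hkey (by linarith)
      _ = 2 ^ (θ/2) * (τ^2) ^ (θ/2) * B ^ (θ/2) := by
          rw [Real.mul_rpow (by positivity) (le_of_lt hBpos),
            Real.mul_rpow (by norm_num) (by positivity)]
      _ = 2 ^ (θ/2) * τ ^ θ * B ^ (θ/2) := by
          congr 1
          congr 1
          rw [← Real.rpow_natCast τ 2, ← Real.rpow_mul hτ0]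
          congr 1
          ring
      _ ≤ 2 * τ ^ θ * B := by
          have h2 : (2:ℝ) ^ (θ/2) ≤ 2 := by
            have := Real.rpow_le_rpow_of_exponent_le (one_le_two (α := ℝ))
              (show θ/2 ≤ 1 by linarith)
            simpa using this
          have hBb : B ^ (θ/2) ≤ B := by
            have := Real.rpow_le_rpow_of_exponent_le hB1 (show θ/2 ≤ 1 by linarith)
            simpa using this
          gcongr
  -- conclude
  rw [div_le_iff₀ hBpos]
  have hsplit : A ^ ((s₁ + 1)/2) = A ^ (s₂/2) * A ^ (θ/2) := by
    rw [← Real.rpow_add hApos]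
    rw [hθ]
    ring_nf
  rw [hsplit]
  have hA2 : 0 ≤ A ^ (s₂/2) := Real.rpow_nonneg (le_of_lt hApos) _
  calc A ^ (s₂/2) * A ^ (θ/2) ≤ A ^ (s₂/2) * (2 * τ ^ θ * B) :=
        mul_le_mul_of_nonneg_left hstep hA2
    _ = 2 * τ ^ θ * A ^ (s₂/2) * B := by ring
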